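/- For all natural numbers n ≥ 1 and N ≥ n, the coefficient of X^n in the polynomial ∏_{k=1}^{N} (1 − X^k) over ℤ equals the coefficient of X^n in the polynomial (1 + 2·∑_{j=1}^{N} (−1)^j X^{j²}) · ∏_{k=1}^{N} (1 + X^k) over ℤ. -/

import Mathlib

open Polynomial Finset

/-- Gaussian binomial `[m, j]_X` as an integer polynomial, `0` outside `0 ≤ j ≤ m`. -/
noncomputable def qb : ℕ → ℤ → Polynomial ℤ
  | 0, j => if j = 0 then 1 else 0
  | (m+1), j => qb m (j-1) + X ^ j.toNat * qb m j

lemma qb_of_neg : ∀ (m : ℕ) {j : ℤ}, j < 0 → qb m j = 0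
  | 0, j, hj => by simp [qb, hj.ne]
  | (m+1), j, hj => by
      rw [qb, qb_of_neg m (by omega), qb_of_neg m hj]; simp

lemma qb_of_gt : ∀ (m : ℕ) {j : ℤ}, (m : ℤ) < j → qb m j = 0
  | 0, j, hj => by simp [qb]; omega
  | (m+1), j, hj => by
      rw [qb, qb_of_gt m (by omega), qb_of_gt m (by omega)]; simp

lemma qb_zero (m : ℕ) : qb m 0 = 1 := by
  induction m with
  | zero => simp [qb]
  | succ m ih => rw [qb, qb_of_neg m (by omega), ih]; simp

lemma qb_self (m : ℕ) : qb m m = 1 := by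
  induction m with
  | zero => simp [qb]
  | succ m ih =>
      have h1 : ((m:ℤ)+1) - 1 = (m:ℤ) := by ring
      have : qb (m+1) ((m:ℤ)+1) = qb m (((m:ℤ)+1)-1) + X ^ ((m:ℤ)+1).toNat * qb m ((m:ℤ)+1) := rfl
      push_cast
      rw [this, h1, ih, qb_of_gt m (by omega)]
      simp

lemma qb_supp {m : ℕ} {j : ℤ} (h : qb m j ≠ 0) : 0 ≤ j ∧ j ≤ m := by
  constructor
  · by_contra hc; exact h (qb_of_neg m (by omega))
  · by_contra hc; exact h (qb_of_gt m (by omega))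

/-- first Pascal rule, by definition. -/
lemma qb_pascal1 (m : ℕ) (j : ℤ) : qb (m+1) j = qb m (j-1) + X ^ j.toNat * qb m j := rfl

lemma one_sub_X_pow_ne_zero {k : ℕ} (hk : 1 ≤ k) : (1 - X ^ k : ℤ[X]) ≠ 0 := by
  intro h
  have := congrArg (fun p => Polynomial.coeff p k) h
  simp only [Polynomial.coeff_sub, Polynomial.coeff_one, Polynomial.coeff_X_pow,
    Polynomial.coeff_zero] at this
  rw [if_neg (by omega : ¬ k = 0)] at this
  simp at this

lemma prodP_ne_zero (s : ℕ) : (∏ k ∈ Icc 1 s, (1 - X ^ k : ℤ[X])) ≠ 0 := by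
  refine Finset.prod_ne_zero_iff.mpr fun k hk => one_sub_X_pow_ne_zero ?_
  exact (Finset.mem_Icc.mp hk).1

/-- `Pp s = ∏_{k=1}^s (1 - X^k)` -/
noncomputable def Pp (s : ℕ) : ℤ[X] := ∏ k ∈ Icc 1 s, (1 - X ^ k)

lemma Pp_succ (s : ℕ) : Pp (s+1) = Pp s * (1 - X ^ (s+1)) :=
  Finset.prod_Icc_succ_top (by omega) _

lemma Pp_zero : Pp 0 = 1 := by simp [Pp]

lemma Pp_ne_zero (s : ℕ) : Pp s ≠ 0 := prodP_ne_zero s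

/-- `E1`: product formula for Gaussian binomials. -/
lemma qb_mul_prod : ∀ (m r : ℕ), r ≤ m → qb m r * Pp r * Pp (m - r) = Pp m := by
  intro m
  induction m with
  | zero => intro r hr; interval_cases r; simp [qb_zero, Pp_zero]
  | succ m ih =>
      intro r hr
      rcases Nat.eq_zero_or_pos r with h0 | h1
      · subst h0; simp [qb_zero, Pp_zero]
      rcases eq_or_lt_of_le hr with hrm | hlt
      · subst hrm
        simp only [Nat.sub_self, Pp_zero, mul_one]
        have : qb (m+1) ((m:ℕ)+1 : ℤ) = 1 := by
          have := qb_self (m+1); push_cast at this ⊢; exact this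
        push_cast
        rw [this, one_mul]
      · -- 1 ≤ r ≤ m
        have hrm : r ≤ m := by omega
        have hcast : ((r:ℤ) - 1) = ((r - 1 : ℕ) : ℤ) := by push_cast [h1]; ring
        have hp1 : qb (m+1) r = qb m ((r:ℤ)-1) + X ^ r * qb m r := by
          have := qb_pascal1 m r
          rwa [Int.toNat_natCast] at this
        rw [hp1, hcast]
        have e1 : Pp r = Pp (r-1) * (1 - X ^ r) := by
          have := Pp_succ (r-1)
          rw [(by omega : r - 1 + 1 = r)] at this
          exact this
        have e2 : Pp (m + 1 - r) = Pp (m - r) * (1 - X ^ (m + 1 - r)) := by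
          have := Pp_succ (m - r)
          rw [(by omega : m - r + 1 = m + 1 - r)] at this
          exact this
        have ih1 : qb m ((r-1:ℕ):ℤ) * Pp (r-1) * Pp (m - (r-1)) = Pp m := ih (r-1) (by omega)
        have ih2 : qb m r * Pp r * Pp (m - r) = Pp m := ih r hrm
        have hmr : m - (r-1) = m + 1 - r := by omega
        rw [hmr] at ih1
        have key : (qb m ((r-1:ℕ):ℤ) + X ^ r * qb m r) * Pp r * Pp (m+1-r)
            = Pp m * (1 - X^r) + X ^ r * (Pp m * (1 - X^(m+1-r))) := by
          rw [e1]
          calc (qb m ((r-1:ℕ):ℤ) + X ^ r * qb m r) * (Pp (r-1) * (1 - X^r)) * Pp (m+1-r)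
              = (qb m ((r-1:ℕ):ℤ) * Pp (r-1) * Pp (m+1-r)) * (1 - X^r)
                + X ^ r * ((qb m r * (Pp (r-1) * (1-X^r)) * Pp (m-r)) * (1 - X^(m+1-r))) := by
                  rw [e2]; ring
            _ = Pp m * (1 - X^r) + X ^ r * (Pp m * (1 - X^(m+1-r))) := by
                  rw [ih1, ← e1, ih2]
        rw [key, Pp_succ]
        have hx : (X:ℤ[X]) ^ r * X ^ (m+1-r) = X ^ (m+1) := by
          rw [← pow_add]; congr 1; omega
        calc Pp m * (1 - X^r) + X ^ r * (Pp m * (1 - X^(m+1-r)))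
            = Pp m * (1 - X ^ r * X ^ (m+1-r)) := by ring
          _ = Pp m * (1 - X ^ (m+1)) := by rw [hx]

/-- interior absorption identity, ℕ version -/
lemma qb_absorb_nat (m r : ℕ) (h1 : 1 ≤ r) (hm : r ≤ m) :
    (1 - X ^ r) * qb m r = (1 - X ^ (m - r + 1)) * qb m ((r:ℤ) - 1) := by
  have hcast : ((r:ℤ) - 1) = ((r - 1 : ℕ) : ℤ) := by push_cast [h1]; ring
  rw [hcast]
  have e1 : Pp r = Pp (r-1) * (1 - X ^ r) := by
    have := Pp_succ (r-1); rw [(by omega : r - 1 + 1 = r)] at this; exact this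
  have e2 : Pp (m - r + 1) = Pp (m - r) * (1 - X ^ (m - r + 1)) := Pp_succ (m-r)
  have ih1 : qb m ((r-1:ℕ):ℤ) * Pp (r-1) * Pp (m - (r-1)) = Pp m := qb_mul_prod m (r-1) (by omega)
  have ih2 : qb m r * Pp r * Pp (m - r) = Pp m := qb_mul_prod m r hm
  have hmr : m - (r-1) = m - r + 1 := by omega
  rw [hmr, e2] at ih1
  rw [e1] at ih2
  apply mul_right_cancel₀ (mul_ne_zero (Pp_ne_zero (r-1)) (Pp_ne_zero (m-r)))
  calc (1 - X ^ r) * qb m r * (Pp (r-1) * Pp (m-r))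
      = qb m r * (Pp (r-1) * (1 - X^r)) * Pp (m-r) := by ring
    _ = Pp m := ih2
    _ = qb m ((r-1:ℕ):ℤ) * Pp (r-1) * (Pp (m-r) * (1 - X ^ (m-r+1))) := ih1.symm
    _ = (1 - X ^ (m - r + 1)) * qb m ((r-1:ℕ):ℤ) * (Pp (r-1) * Pp (m-r)) := by ring

/-- `E3`: absorption identity, all integers `s`. -/
lemma qb_absorb (m : ℕ) (s : ℤ) :
    (1 - X ^ s.toNat) * qb m s = (1 - X ^ ((m - s + 1).toNat)) * qb m (s-1) := by
  rcases lt_trichotomy s 0 with hs | hs | hs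
  · rw [qb_of_neg m hs, qb_of_neg m (by omega)]; ring
  · subst hs
    rw [qb_of_neg m (show (0:ℤ)-1 < 0 by omega)]
    simp
  rcases le_or_gt s m with hsm | hsm
  · -- 1 ≤ s ≤ m
    obtain ⟨r, rfl⟩ : ∃ r:ℕ, s = (r:ℤ) := ⟨s.toNat, by omega⟩
    have h2 : ((m:ℤ) - r + 1).toNat = m - r + 1 := by omega
    rw [h2, Int.toNat_natCast, qb_absorb_nat m r (by omega) (by omega)]
  rcases eq_or_lt_of_le (by omega : (m:ℤ) + 1 ≤ s) with hs1 | hs1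
  · rw [qb_of_gt m (by omega), (by omega : ((m:ℤ) - s + 1).toNat = 0)]
    simp
  · rw [qb_of_gt m (by omega), qb_of_gt m (by omega)]; ring

/-- `P2`: second Pascal rule, all integers `j`. -/
lemma qb_pascal2 (m : ℕ) (j : ℤ) :
    qb (m+1) j = X ^ (((m:ℤ) + 1 - j).toNat) * qb m (j-1) + qb m j := by
  rcases lt_trichotomy j 0 with hj | hj | hj
  · rw [qb_of_neg (m+1) hj, qb_of_neg m (by omega), qb_of_neg m hj]; ring
  · subst hj; rw [qb_zero, qb_of_neg m (by omega), qb_zero]; ring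
  rcases le_or_gt j m with hjm | hjm
  · -- 1 ≤ j ≤ m
    obtain ⟨r, rfl⟩ : ∃ r:ℕ, j = (r:ℤ) := ⟨j.toNat, by omega⟩
    have hr1 : 1 ≤ r := by omega
    have hrm : r ≤ m := by omega
    have hexp : (((m:ℤ) + 1 - r).toNat) = m + 1 - r := by omega
    rw [hexp]
    apply mul_right_cancel₀ (mul_ne_zero (Pp_ne_zero r) (Pp_ne_zero (m+1-r)))
    have lhs : qb (m+1) r * (Pp r * Pp (m+1-r)) = Pp (m+1) := by
      have := qb_mul_prod (m+1) r (by omega)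
      rw [(by omega : m + 1 - r = m + 1 - r)] at this
      calc qb (m+1) r * (Pp r * Pp (m+1-r)) = qb (m+1) r * Pp r * Pp (m+1-r) := by ring
        _ = Pp (m+1) := this
    rw [lhs]
    symm
    have e1 : Pp r = Pp (r-1) * (1 - X ^ r) := by
      have := Pp_succ (r-1); rw [(by omega : r - 1 + 1 = r)] at this; exact this
    have e2 : Pp (m + 1 - r) = Pp (m - r) * (1 - X ^ (m + 1 - r)) := by
      have := Pp_succ (m - r); rw [(by omega : m - r + 1 = m + 1 - r)] at this; exact this
    have ih1 : qb m ((r-1:ℕ):ℤ) * Pp (r-1) * Pp (m+1-r) = Pp m := by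
      have := qb_mul_prod m (r-1) (by omega)
      rw [(by omega : m - (r-1) = m + 1 - r)] at this; exact this
    have ih2 : qb m r * Pp r * Pp (m - r) = Pp m := qb_mul_prod m r hrm
    have hcast : ((r:ℤ) - 1) = ((r - 1 : ℕ) : ℤ) := by push_cast [hr1]; ring
    rw [hcast]
    have hx : (X:ℤ[X]) ^ (m+1-r) * X ^ r = X ^ (m+1) := by
      rw [← pow_add]; congr 1; omega
    calc (X ^ (m+1-r) * qb m ((r-1:ℕ):ℤ) + qb m r) * (Pp r * Pp (m+1-r))
        = X ^ (m+1-r) * ((qb m ((r-1:ℕ):ℤ) * Pp (r-1) * Pp (m+1-r)) * (1 - X ^ r))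
          + (qb m r * Pp r * Pp (m-r)) * (1 - X ^ (m+1-r)) := by
            rw [e1, e2]; ring
      _ = X ^ (m+1-r) * (Pp m * (1 - X ^ r)) + Pp m * (1 - X ^ (m+1-r)) := by
            rw [ih1, ih2]
      _ = Pp m * (1 - X ^ (m+1-r) * X ^ r) := by ring
      _ = Pp (m+1) := by rw [hx, Pp_succ]
  rcases eq_or_lt_of_le (by omega : (m:ℤ) + 1 ≤ j) with hj1 | hj1
  · have h1 : qb (m+1) j = 1 := by rw [← hj1]; push_cast; exact_mod_cast qb_self (m+1)
    have h2 : qb m (j - 1) = 1 := by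
      rw [← hj1, (by push_cast; ring : (m:ℤ) + 1 - 1 = (m:ℤ))]; exact qb_self m
    rw [h1, h2, qb_of_gt m (by omega), (by omega : ((m:ℤ) + 1 - j).toNat = 0)]
    simp
  · rw [qb_of_gt (m+1) (by omega), qb_of_gt m (by omega), qb_of_gt m (by omega)]; ring

/-- three-term expansion of a double Pascal step -/
lemma qb_three (m : ℕ) (r : ℤ) :
    qb (m+2) r = qb m (r-2) + (X ^ ((r-1).toNat) + X ^ (m+1)) * qb m (r-1)
      + X ^ r.toNat * qb m r := by
  have h1 : qb (m+2) r = qb (m+1) (r-1) + X ^ r.toNat * qb (m+1) r := qb_pascal1 (m+1) r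
  have h2 : qb (m+1) (r-1) = qb m (r-1-1) + X ^ (r-1).toNat * qb m (r-1) := qb_pascal1 m (r-1)
  have h3 : qb (m+1) r = X ^ (((m:ℤ) + 1 - r).toNat) * qb m (r-1) + qb m r := qb_pascal2 m r
  have h4 : (X:ℤ[X]) ^ r.toNat * (X ^ (((m:ℤ) + 1 - r).toNat) * qb m (r-1))
      = X ^ (m+1) * qb m (r-1) := by
    by_cases hz : qb m (r-1) = 0
    · rw [hz]; ring
    · obtain ⟨hl, hr⟩ := qb_supp hz
      have : r.toNat + (((m:ℤ) + 1 - r).toNat) = m + 1 := by omega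
      rw [← mul_assoc, ← pow_add, this]
  have h5 : r - 1 - 1 = r - 2 := by ring
  rw [h1, h2, h3, h5, mul_add, h4]
  ring

/-- the key three-term recurrence for central Gaussian binomials -/
lemma qb_N (n : ℕ) (j : ℤ) :
    qb (2*n+2) ((n:ℤ)+1+j) = (1 + X ^ (2*n+1)) * qb (2*n) ((n:ℤ)+j)
      + X ^ (((n:ℤ)+j+1).toNat) * qb (2*n) ((n:ℤ)+j+1)
      + X ^ (((n:ℤ)+1-j).toNat) * qb (2*n) ((n:ℤ)+j-1) := by
  have hC := qb_three (2*n) ((n:ℤ)+1+j)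
  have hE := qb_absorb (2*n) ((n:ℤ)+j)
  have e1 : ((n:ℤ)+1+j-2) = (n:ℤ)+j-1 := by ring
  have e2 : ((n:ℤ)+1+j-1) = (n:ℤ)+j := by ring
  have e3 : ((n:ℤ)+1+j).toNat = ((n:ℤ)+j+1).toNat := by omega
  have e4 : (((2*n:ℕ):ℤ) - ((n:ℤ)+j) + 1).toNat = ((n:ℤ)+1-j).toNat := by push_cast; omega
  have e5 := congrArg (qb (2*n)) (by ring : (n:ℤ)+1+j = (n:ℤ)+j+1)
  rw [e1, e2, e3, e5] at hC
  rw [e4] at hE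
  linear_combination hC - hE

/-- substitution `X ↦ X²` as a ring hom -/
noncomputable def σ : ℤ[X] →+* ℤ[X] := eval₂RingHom C (X^2)

lemma σ_X_pow (e : ℕ) : σ (X ^ e) = X ^ (2*e) := by
  rw [map_pow, σ, coe_eval₂RingHom, eval₂_X, ← pow_mul, mul_comm]

/-- composed with X² : the three-term recurrence -/
lemma qbc_N (n : ℕ) (j : ℤ) :
    σ (qb (2*n+2) ((n:ℤ)+1+j)) = (1 + X ^ (4*n+2)) * σ (qb (2*n) ((n:ℤ)+j))
      + X ^ (2*(((n:ℤ)+j+1).toNat)) * σ (qb (2*n) ((n:ℤ)+j+1))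
      + X ^ (2*(((n:ℤ)+1-j).toNat)) * σ (qb (2*n) ((n:ℤ)+j-1)) := by
  have := congrArg σ (qb_N n j)
  rw [map_add, map_add, map_mul, map_mul, map_mul, map_add, map_one,
    σ_X_pow, σ_X_pow, σ_X_pow] at this
  rw [this, (by ring : 2*(2*n+1) = 4*n+2)]

noncomputable def sg (j : ℤ) : ℤ[X] := (-1) ^ j.natAbs

lemma sg_succ (j : ℤ) : sg (j+1) = - sg j := by
  rcases le_or_gt 0 j with h | h
  · rw [sg, sg, (by omega : (j+1).natAbs = j.natAbs + 1), pow_succ]; ring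
  · rw [sg, sg, (by omega : j.natAbs = (j+1).natAbs + 1), pow_succ]; ring

lemma sg_pred (j : ℤ) : sg (j-1) = - sg j := by
  have := sg_succ (j-1); rw [sub_add_cancel] at this; rw [this]; ring

lemma sg_neg (j : ℤ) : sg (-j) = sg j := by rw [sg, sg, Int.natAbs_neg]

/-- summand of the theta-like sum -/
noncomputable def tm (n : ℕ) (j : ℤ) : ℤ[X] :=
  sg j * X ^ (j^2).toNat * σ (qb (2*n) ((n:ℤ)+j))

lemma tm_vanish {n : ℕ} {j : ℤ} (h : (n:ℤ) < |j|) : tm n j = 0 := by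
  have : qb (2*n) ((n:ℤ)+j) = 0 := by
    rcases abs_cases j with ⟨h1, _⟩ | ⟨h1, _⟩
    · exact qb_of_gt _ (by push_cast; omega)
    · exact qb_of_neg _ (by omega)
  rw [tm, this, map_zero, mul_zero]

noncomputable def F (n : ℕ) : ℤ[X] := ∑ j ∈ Icc (-(n:ℤ)) n, tm n j

lemma F_pad (n M : ℕ) (h : n ≤ M) : F n = ∑ j ∈ Icc (-(M:ℤ)) M, tm n j := by
  rw [F]
  apply Finset.sum_subset
  · apply Finset.Icc_subset_Icc <;> omega
  · intro j hj hnj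
    simp only [Finset.mem_Icc, not_and, not_le] at hj hnj
    apply tm_vanish
    by_cases hc : -(n:ℤ) ≤ j
    · have := hnj hc; rw [abs_of_pos (by omega)]; omega
    · rw [abs_of_neg (by omega)]; omega

noncomputable def uu (n : ℕ) (j : ℤ) : ℤ[X] :=
  sg j * X ^ ((j^2).toNat + 2*(((n:ℤ)+j+1).toNat)) * σ (qb (2*n) ((n:ℤ)+j+1))

noncomputable def vv (n : ℕ) (j : ℤ) : ℤ[X] :=
  sg j * X ^ ((j^2).toNat + 2*(((n:ℤ)+1-j).toNat)) * σ (qb (2*n) ((n:ℤ)+j-1))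

lemma tm_split (n : ℕ) (j : ℤ) :
    tm (n+1) j = (1 + X^(4*n+2)) * tm n j + uu n j + vv n j := by
  have harg : ((n+1:ℕ):ℤ) + j = (n:ℤ) + 1 + j := by push_cast; ring
  have h2 : 2*(n+1) = 2*n+2 := by ring
  rw [tm, h2, harg, qbc_N n j, tm, uu, vv, pow_add, pow_add]
  ring

lemma sum_uu (n : ℕ) : ∑ j ∈ Icc (-(n:ℤ)-1) ((n:ℤ)+1), uu n j = -X^(2*n+1) * F n := by
  have hshrink : ∑ j ∈ Icc (-(n:ℤ)-1) ((n:ℤ)-1), uu n j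
      = ∑ j ∈ Icc (-(n:ℤ)-1) ((n:ℤ)+1), uu n j := by
    apply Finset.sum_subset
    · apply Finset.Icc_subset_Icc <;> omega
    · intro j hj hnj
      simp only [Finset.mem_Icc, not_and, not_le] at hj hnj
      have : qb (2*n) ((n:ℤ)+j+1) = 0 := qb_of_gt _ (by push_cast; omega)
      rw [uu, this, map_zero, mul_zero]
  rw [← hshrink]
  have hmap : Finset.Icc (-(n:ℤ)-1) ((n:ℤ)-1)
      = (Finset.Icc (-(n:ℤ)) ((n:ℤ))).map (addRightEmbedding (-1)) := by
    rw [map_add_right_Icc]; congr 1 <;> try ring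
  rw [hmap, Finset.sum_map]
  have hterm : ∀ i : ℤ, uu n (addRightEmbedding (-1) i) = -X^(2*n+1) * tm n i := by
    intro i
    have hemb : addRightEmbedding (-1) i = i - 1 := by
      simp [addRightEmbedding]; ring
    rw [hemb, uu]
    have harg : (n:ℤ) + (i-1) + 1 = (n:ℤ) + i := by ring
    rw [harg]
    by_cases hz : qb (2*n) ((n:ℤ)+i) = 0
    · rw [hz, map_zero, mul_zero, tm, hz, map_zero, mul_zero, mul_zero]
    · obtain ⟨hl, hr⟩ := qb_supp hz
      have hexp : ((i-1)^2).toNat + 2*(((n:ℤ)+i).toNat) = (2*n+1) + (i^2).toNat := by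
        have hh : ((i-1)^2 : ℤ) = i^2 - 2*i + 1 := by ring
        have h2 : (0:ℤ) ≤ i^2 := sq_nonneg _
        have h3 : (0:ℤ) ≤ (i-1)^2 := sq_nonneg _
        rw [hh] at h3
        rw [hh]
        generalize (i:ℤ)^2 = s at h2 h3 ⊢
        omega
      rw [hexp, sg_pred, pow_add, tm]
      ring
  rw [Finset.sum_congr rfl (fun i _ => hterm i), ← Finset.mul_sum, F]

lemma sum_vv (n : ℕ) : ∑ j ∈ Icc (-(n:ℤ)-1) ((n:ℤ)+1), vv n j = -X^(2*n+1) * F n := by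
  have hshrink : ∑ j ∈ Icc (-(n:ℤ)+1) ((n:ℤ)+1), vv n j
      = ∑ j ∈ Icc (-(n:ℤ)-1) ((n:ℤ)+1), vv n j := by
    apply Finset.sum_subset
    · apply Finset.Icc_subset_Icc <;> omega
    · intro j hj hnj
      simp only [Finset.mem_Icc, not_and, not_le] at hj hnj
      have : qb (2*n) ((n:ℤ)+j-1) = 0 := qb_of_neg _ (by omega)
      rw [vv, this, map_zero, mul_zero]
  rw [← hshrink]
  have hmap : Finset.Icc (-(n:ℤ)+1) ((n:ℤ)+1)
      = (Finset.Icc (-(n:ℤ)) ((n:ℤ))).map (addRightEmbedding 1) := by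
    rw [map_add_right_Icc]
  rw [hmap, Finset.sum_map]
  have hterm : ∀ i : ℤ, vv n (addRightEmbedding 1 i) = -X^(2*n+1) * tm n i := by
    intro i
    have hemb : addRightEmbedding 1 i = i + 1 := by simp [addRightEmbedding]
    rw [hemb, vv]
    have harg : (n:ℤ) + (i+1) - 1 = (n:ℤ) + i := by ring
    rw [harg]
    by_cases hz : qb (2*n) ((n:ℤ)+i) = 0
    · rw [hz, map_zero, mul_zero, tm, hz, map_zero, mul_zero, mul_zero]
    · obtain ⟨hl, hr⟩ := qb_supp hz
      have hexp : ((i+1)^2).toNat + 2*(((n:ℤ)+1-(i+1)).toNat) = (2*n+1) + (i^2).toNat := by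
        have hh : ((i+1)^2 : ℤ) = i^2 + 2*i + 1 := by ring
        have h2 : (0:ℤ) ≤ i^2 := sq_nonneg _
        have h3 : (0:ℤ) ≤ (i+1)^2 := sq_nonneg _
        rw [hh] at h3
        rw [hh]
        generalize (i:ℤ)^2 = s at h2 h3 ⊢
        omega
      rw [hexp, sg_succ, pow_add, tm]
      ring
  rw [Finset.sum_congr rfl (fun i _ => hterm i), ← Finset.mul_sum, F]

lemma F_succ (n : ℕ) : F (n+1) = (1 - X^(2*n+1))^2 * F n := by
  have hIcc : Finset.Icc (-((n+1:ℕ):ℤ)) ((n+1:ℕ):ℤ) = Finset.Icc (-(n:ℤ)-1) ((n:ℤ)+1) := by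
    congr 1 <;> push_cast <;> ring
  have hpad : ∑ j ∈ Icc (-(n:ℤ)-1) ((n:ℤ)+1), tm n j = F n := by
    rw [← hIcc, ← F_pad n (n+1) (by omega)]
  rw [F, hIcc]
  calc ∑ j ∈ Icc (-(n:ℤ)-1) ((n:ℤ)+1), tm (n+1) j
      = ∑ j ∈ Icc (-(n:ℤ)-1) ((n:ℤ)+1), ((1 + X^(4*n+2)) * tm n j + uu n j + vv n j) := by
        exact Finset.sum_congr rfl (fun j _ => tm_split n j)
    _ = (1 + X^(4*n+2)) * (∑ j ∈ Icc (-(n:ℤ)-1) ((n:ℤ)+1), tm n j)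
        + (∑ j ∈ Icc (-(n:ℤ)-1) ((n:ℤ)+1), uu n j)
        + (∑ j ∈ Icc (-(n:ℤ)-1) ((n:ℤ)+1), vv n j) := by
        rw [Finset.sum_add_distrib, Finset.sum_add_distrib, Finset.mul_sum]
    _ = (1 + X^(4*n+2)) * F n + (-X^(2*n+1) * F n) + (-X^(2*n+1) * F n) := by
        rw [hpad, sum_uu, sum_vv]
    _ = (1 - X^(2*n+1))^2 * F n := by ring


lemma F_zero : F 0 = 1 := by
  have h0 : F 0 = tm 0 0 := by
    rw [F]
    norm_num
  rw [h0, tm, (by norm_num : ((0:ℕ):ℤ) + 0 = 0), qb_zero, map_one, sg]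
  simp

lemma F_closed (n : ℕ) : F n = (∏ k ∈ Icc 1 n, (1 - X^(2*k-1)))^2 := by
  induction n with
  | zero => rw [F_zero]; simp
  | succ n ih =>
      rw [F_succ, ih, Finset.prod_Icc_succ_top (by omega : 1 ≤ n+1),
        (by omega : 2*(n+1)-1 = 2*n+1), mul_pow]
      ring

/-- `Pq s = ∏_{k=1}^s (1 - X^{2k})` -/
noncomputable def Pq (s : ℕ) : ℤ[X] := ∏ k ∈ Icc 1 s, (1 - X ^ (2*k))

lemma Pq_ne_zero (s : ℕ) : Pq s ≠ 0 := by
  refine Finset.prod_ne_zero_iff.mpr fun k hk => ?_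
  have hk1 : 1 ≤ k := (Finset.mem_Icc.mp hk).1
  intro h
  have := congrArg (fun p => Polynomial.coeff p (2*k)) h
  simp only [Polynomial.coeff_sub, Polynomial.coeff_one, Polynomial.coeff_X_pow,
    Polynomial.coeff_zero] at this
  rw [if_neg (by omega : ¬ 2*k = 0)] at this
  simp at this

lemma σ_Pp (s : ℕ) : σ (Pp s) = Pq s := by
  rw [Pp, Pq, map_prod]
  exact Finset.prod_congr rfl fun k _ => by rw [map_sub, map_one, σ_X_pow]

lemma qbc_mul_prod (m r : ℕ) (h : r ≤ m) :
    σ (qb m r) * Pq r * Pq (m - r) = Pq m := by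
  have := congrArg σ (qb_mul_prod m r h)
  rwa [map_mul, map_mul, σ_Pp, σ_Pp, σ_Pp] at this

lemma Pq_split (a b : ℕ) (h : a ≤ b) :
    Pq b = Pq a * ∏ k ∈ Icc (a+1) b, (1 - X ^ (2*k)) := by
  have hU : Icc 1 a ∪ Icc (a+1) b = Icc 1 b := by
    ext x; simp only [Finset.mem_Icc, Finset.mem_union]; omega
  have hd : Disjoint (Icc 1 a) (Icc (a+1) b) := by
    simp only [Finset.disjoint_left, Finset.mem_Icc]; intros x hx hc; omega
  rw [Pq, Pq, ← hU, Finset.prod_union hd]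

/-- exact form: `qb₂(m,r) ∏_{k≤r}(1-X^{2k}) = ∏_{k=m-r+1}^{m}(1-X^{2k})` -/
lemma qbc_exact (m r : ℕ) (h : r ≤ m) :
    σ (qb m r) * Pq r = ∏ k ∈ Icc (m-r+1) m, (1 - X ^ (2*k)) := by
  apply mul_left_cancel₀ (Pq_ne_zero (m-r))
  calc Pq (m-r) * (σ (qb m r) * Pq r) = σ (qb m r) * Pq r * Pq (m - r) := by ring
    _ = Pq m := qbc_mul_prod m r h
    _ = Pq (m-r) * ∏ k ∈ Icc (m-r+1) m, (1 - X ^ (2*k)) := Pq_split (m-r) m (by omega)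

lemma dvd_prod_sub_one {t : ℕ} {s : Finset ℕ} {f : ℕ → ℤ[X]}
    (h : ∀ k ∈ s, (X:ℤ[X])^t ∣ f k) : (X:ℤ[X])^t ∣ (∏ k ∈ s, (1 - f k)) - 1 := by
  induction s using Finset.induction with
  | empty => simp
  | @insert a s ha ih =>
      rw [Finset.prod_insert ha]
      have h1 := ih (fun k hk => h k (Finset.mem_insert_of_mem hk))
      have h2 := h a (Finset.mem_insert_self a s)
      have : (1 - f a) * ∏ k ∈ s, (1 - f k) - 1
          = ((∏ k ∈ s, (1 - f k)) - 1) - f a * ∏ k ∈ s, (1 - f k) := by ring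
      rw [this]
      exact dvd_sub h1 (h2.mul_right _)

lemma Pq_congr {c a b : ℕ} (hc : c ≤ a) (hab : a ≤ b) :
    (X:ℤ[X])^(2*c+2) ∣ Pq b - Pq a := by
  rw [Pq_split a b hab]
  have : Pq a * ∏ k ∈ Icc (a+1) b, (1 - X^(2*k)) - Pq a
      = Pq a * ((∏ k ∈ Icc (a+1) b, (1 - X^(2*k))) - 1) := by ring
  rw [this]
  refine Dvd.dvd.mul_left ?_ _
  refine dvd_prod_sub_one fun k hk => ?_
  have := (Finset.mem_Icc.mp hk).1
  exact pow_dvd_pow _ (by omega)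

/-- stability: `qb₂(2N, N+j) · ∏_{k≤N}(1-X^{2k}) ≡ 1 mod X^{2(N-|j|)+2}` -/
lemma stab (N : ℕ) (j : ℤ) (hj : j.natAbs ≤ N) :
    (X:ℤ[X])^(2*(N - j.natAbs)+2) ∣ σ (qb (2*N) ((N:ℤ)+j)) * Pq N - 1 := by
  set c := N - j.natAbs with hc
  obtain ⟨r, hr⟩ : ∃ r : ℕ, ((N:ℤ)+j) = (r:ℤ) := ⟨((N:ℤ)+j).toNat, by omega⟩
  have hr2N : r ≤ 2*N := by omega
  have hcr : c ≤ r := by omega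
  have hcr2 : c ≤ 2*N - r := by omega
  have hcN : c ≤ N := by omega
  rw [hr]
  have hT := qbc_exact (2*N) r hr2N
  have hsplit : σ (qb (2*N) r) * Pq N - 1
      = σ (qb (2*N) r) * (Pq N - Pq r) + ((σ (qb (2*N) r) * Pq r) - 1) := by ring
  rw [hsplit, hT]
  apply dvd_add
  · rcases le_or_gt r N with h | h
    · exact Dvd.dvd.mul_left (Pq_congr hcr h) _
    · have := Pq_congr hcN h.le
      have hneg : Pq N - Pq r = -(Pq r - Pq N) := by ring
      rw [hneg]
      exact Dvd.dvd.mul_left (dvd_neg.mpr this) _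
  · refine dvd_prod_sub_one fun k hk => ?_
    have := (Finset.mem_Icc.mp hk).1
    exact pow_dvd_pow _ (by omega)

/-- theta sum -/
noncomputable def Sp (N : ℕ) : ℤ[X] := ∑ j ∈ Icc (-(N:ℤ)) N, sg j * X ^ ((j^2).toNat)

lemma sum_stab (N : ℕ) : (X:ℤ[X])^(N+1) ∣ F N * Pq N - Sp N := by
  rw [F, Sp, Finset.sum_mul, ← Finset.sum_sub_distrib]
  refine Finset.dvd_sum fun j hj => ?_
  simp only [Finset.mem_Icc] at hj
  have hja : j.natAbs ≤ N := by omega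
  have h1 : tm N j * Pq N - sg j * X ^ ((j^2).toNat)
      = sg j * X ^ ((j^2).toNat) * (σ (qb (2*N) ((N:ℤ)+j)) * Pq N - 1) := by
    rw [tm]; ring
  rw [h1]
  have h2 := stab N j hja
  have h3 : (X:ℤ[X])^(N+1) ∣ X ^ ((j^2).toNat) * (σ (qb (2*N) ((N:ℤ)+j)) * Pq N - 1) := by
    have hle : N+1 ≤ (j^2).toNat + (2*(N - j.natAbs)+2) := by
      have hsq : (j^2).toNat = j.natAbs * j.natAbs := by
        have h := Int.natAbs_mul_self (a := j)
        have h2 : ((j.natAbs * j.natAbs : ℕ) : ℤ).toNat = (j*j).toNat := congrArg Int.toNat h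
        rw [Int.toNat_natCast] at h2
        rw [sq, ← h2]
      rw [hsq]
      rcases Nat.eq_zero_or_pos j.natAbs with h0 | h1
      · rw [h0]; omega
      · have : j.natAbs ≤ j.natAbs * j.natAbs := Nat.le_mul_of_pos_left _ h1
        omega
    calc (X:ℤ[X])^(N+1) ∣ X ^ ((j^2).toNat) * X ^ (2*(N - j.natAbs)+2) := by
          rw [← pow_add]; exact pow_dvd_pow _ hle
      _ ∣ _ := mul_dvd_mul_left _ h2
  rw [mul_assoc]
  exact Dvd.dvd.mul_left h3 _

noncomputable def Bp (N : ℕ) : ℤ[X] := ∏ k ∈ Icc 1 N, (1 + X ^ k)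
noncomputable def Vp (N : ℕ) : ℤ[X] := ∏ k ∈ Icc 1 N, (1 - X ^ (2*k-1))
noncomputable def Wp (N : ℕ) : ℤ[X] := ∏ k ∈ Icc (N+1) (2*N), (1 - X ^ k)

lemma R1 : ∀ N : ℕ, Pp (2*N) = Pq N * Vp N := by
  intro N
  induction N with
  | zero => simp [Pp, Pq, Vp]
  | succ N ih =>
      have h1 : 2*(N+1) = 2*N+1+1 := by ring
      rw [h1, Pp, Finset.prod_Icc_succ_top (by omega), Finset.prod_Icc_succ_top (by omega),
        ← Pp]
      rw [Pq, Finset.prod_Icc_succ_top (by omega), ← Pq,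
        Vp, Finset.prod_Icc_succ_top (by omega), ← Vp, ih]
      rw [(by omega : 2*(N+1)-1 = 2*N+1), (by ring : 2*(N+1) = 2*N+1+1)]
      ring

lemma R2 (N : ℕ) : Pq N = Pp N * Bp N := by
  rw [Pq, Pp, Bp, ← Finset.prod_mul_distrib]
  refine Finset.prod_congr rfl fun k _ => ?_
  rw [two_mul, pow_add]
  ring

lemma R3 (N : ℕ) : Pp (2*N) = Pp N * Wp N := by
  have hU : Icc 1 N ∪ Icc (N+1) (2*N) = Icc 1 (2*N) := by
    ext x; simp only [Finset.mem_Icc, Finset.mem_union]; omega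
  have hd : Disjoint (Icc 1 N) (Icc (N+1) (2*N)) := by
    simp only [Finset.disjoint_left, Finset.mem_Icc]; intros x hx hc; omega
  rw [Pp, Pp, Wp, ← hU, Finset.prod_union hd]

lemma hBV (N : ℕ) : Bp N * Vp N = Wp N := by
  apply mul_left_cancel₀ (Pp_ne_zero N)
  calc Pp N * (Bp N * Vp N) = (Pp N * Bp N) * Vp N := by ring
    _ = Pq N * Vp N := by rw [R2]
    _ = Pp (2*N) := (R1 N).symm
    _ = Pp N * Wp N := R3 N

lemma hW1 (N : ℕ) : (X:ℤ[X])^(N+1) ∣ Wp N - 1 := by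
  refine dvd_prod_sub_one fun k hk => ?_
  have := (Finset.mem_Icc.mp hk).1
  exact pow_dvd_pow _ (by omega)

/-- Main divisibility: `∏(1-X^k) ≡ Sp · ∏(1+X^k) mod X^{N+1}` -/
lemma main_dvd (N : ℕ) : (X:ℤ[X])^(N+1) ∣ Pp N - Sp N * Bp N := by
  have h1 : (X:ℤ[X])^(N+1) ∣ (F N * Pq N - Sp N) * Bp N := (sum_stab N).mul_right _
  have h2 : (F N * Pq N - Sp N) * Bp N = Pp N * Wp N ^ 2 - Sp N * Bp N := by
    rw [F_closed, ← Vp, R2, ← hBV]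
    ring
  rw [h2] at h1
  have h3 : (X:ℤ[X])^(N+1) ∣ Pp N * Wp N ^ 2 - Pp N := by
    have : Pp N * Wp N ^ 2 - Pp N = Pp N * (Wp N + 1) * (Wp N - 1) := by ring
    rw [this]
    exact (hW1 N).mul_left _
  have := dvd_sub h1 h3
  have h4 : Pp N * Wp N ^ 2 - Sp N * Bp N - (Pp N * Wp N ^ 2 - Pp N)
      = Pp N - Sp N * Bp N := by ring
  rwa [h4] at this

lemma pos_sum (N : ℕ) : ∑ j ∈ Icc (1:ℤ) (N:ℤ), sg j * X^((j^2).toNat)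
    = ∑ j ∈ Icc (1:ℕ) N, (-1:ℤ[X])^j * X^(j^2) := by
  induction N with
  | zero => simp
  | succ N ih =>
      rw [Finset.sum_Icc_succ_top (by omega : 1 ≤ N+1)]
      have hins : Icc (1:ℤ) ((N+1:ℕ):ℤ) = insert ((N:ℤ)+1) (Icc (1:ℤ) (N:ℤ)) := by
        ext x; simp only [Finset.mem_Icc, Finset.mem_insert]; push_cast; omega
      have hnm : ((N:ℤ)+1) ∉ Icc (1:ℤ) (N:ℤ) := by
        simp only [Finset.mem_Icc]; omega
      rw [hins, Finset.sum_insert hnm, ih]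
      have hsg : sg ((N:ℤ)+1) = (-1:ℤ[X])^(N+1) := by
        rw [sg, (by omega : ((N:ℤ)+1).natAbs = N+1)]
      have hexp : (((N:ℤ)+1)^2).toNat = (N+1)^2 := by
        have h : ((N:ℤ)+1)^2 = (((N+1)^2 : ℕ) : ℤ) := by push_cast; ring
        rw [h, Int.toNat_natCast]
      rw [hsg, hexp]
      ring

lemma Sp_eq (N : ℕ) :
    Sp N = 1 + 2 * ∑ j ∈ Icc 1 N, (-1 : ℤ[X]) ^ j * X ^ (j ^ 2) := by
  have h1 : Icc (-(N:ℤ)) (N:ℤ) = (Icc (-(N:ℤ)) (-1)) ∪ Icc (0:ℤ) (N:ℤ) := by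
    ext x; simp only [Finset.mem_Icc, Finset.mem_union]; omega
  have hd : Disjoint (Icc (-(N:ℤ)) (-1)) (Icc (0:ℤ) (N:ℤ)) := by
    simp only [Finset.disjoint_left, Finset.mem_Icc]; intros x hx hc; omega
  rw [Sp, h1, Finset.sum_union hd]
  have hneg : ∑ j ∈ Icc (-(N:ℤ)) (-1), sg j * X^((j^2).toNat)
      = ∑ j ∈ Icc (1:ℤ) (N:ℤ), sg j * X^((j^2).toNat) := by
    apply Finset.sum_nbij' (fun j => -j) (fun j => -j)
    · intro a ha; simp only [Finset.mem_Icc] at *; omega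
    · intro a ha; simp only [Finset.mem_Icc] at *; omega
    · intro a _; ring
    · intro a _; ring
    · intro a _
      rw [sg_neg, neg_sq]
  have hzero : Icc (0:ℤ) (N:ℤ) = insert 0 (Icc (1:ℤ) (N:ℤ)) := by
    ext x; simp only [Finset.mem_Icc, Finset.mem_insert]; omega
  have hnm : (0:ℤ) ∉ Icc (1:ℤ) (N:ℤ) := by simp only [Finset.mem_Icc]; omega
  rw [hneg, hzero, Finset.sum_insert hnm, pos_sum]
  have hg0 : sg 0 * X^(((0:ℤ)^2).toNat) = 1 := by
    rw [sg]
    simp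
  rw [hg0]
  ring

/-- Truncated coefficient form of Gauss's identity
`∏_{k≥1} (1 - x^k)/(1 + x^k) = ∑_{n ∈ ℤ} (-1)^n x^{n²}`: for `1 ≤ n ≤ N`, the
coefficient of `X^n` in `∏_{k=1}^{N} (1 - X^k)` equals the coefficient of `X^n` in
`(1 + 2 ∑_{j=1}^{N} (-1)^j X^{j²}) · ∏_{k=1}^{N} (1 + X^k)`. -/
theorem gauss_identity_coeff (n N : ℕ) (hn : 1 ≤ n) (hN : n ≤ N) :
    (∏ k ∈ Finset.Icc 1 N, (1 - X ^ k : Polynomial ℤ)).coeff n =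
      ((1 + 2 * ∑ j ∈ Finset.Icc 1 N, (-1 : Polynomial ℤ) ^ j * X ^ (j ^ 2)) *
        ∏ k ∈ Finset.Icc 1 N, (1 + X ^ k)).coeff n := by
  have key := main_dvd N
  rw [Sp_eq] at key
  rw [Polynomial.X_pow_dvd_iff] at key
  have h := key n (by omega)
  rw [Polynomial.coeff_sub, sub_eq_zero] at h
  exact h
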